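/- There exist r > 0 and a holomorphic function G on the open ball B(√8, r) ⊆ ℂ with G(√8) = −3·2^{7/4} such that for every z ∈ B(√8, r) with z ∉ (−∞, √8], one has (1/2)·∫_{[√8, z]} (8 + 4s² − s⁴)·(s − √8)^{−1/2}·(s + √8)^{−1/2} ds = (z − √8)^{1/2}·G(z), where the integral is taken along the straight segment from √8 to z (the integrand has an integrable singularity at s = √8). Equivalently, φ°(z) = −3·2^{7/4}·(z − √8)^{1/2}·(1 + h°(z)) with h° holomorphic near √8 and h°(√8) = 0. -/

import Mathlib

open MeasureTheory

/-- The point `√8 = 2√2` as a complex number. -/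
noncomputable def c8 : ℂ := (Real.sqrt 8 : ℝ)

lemma sqrt8_gt : (2:ℝ) < Real.sqrt 8 := by
  rw [show (2:ℝ) = Real.sqrt 4 by rw [show (4:ℝ) = 2^2 by norm_num, Real.sqrt_sq]; norm_num]
  exact Real.sqrt_lt_sqrt (by norm_num) (by norm_num)

lemma c8_re : c8.re = Real.sqrt 8 := rfl
lemma c8_im : c8.im = 0 := rfl

noncomputable def Qf : ℂ → ℂ := fun s => (8 + 4*s^2 - s^4) * (s + c8) ^ (-(1:ℂ)/2)

lemma Qf_diff : ∀ s ∈ Metric.ball c8 2, DifferentiableAt ℂ Qf s := by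
  intro s hs
  have hre : 0 < (s + c8).re := by
    have h1 : |(s - c8).re| ≤ ‖s - c8‖ := Complex.abs_re_le_norm _
    rw [Metric.mem_ball, Complex.dist_eq] at hs
    have := abs_le.1 (h1.trans hs.le)
    simp only [Complex.add_re, Complex.sub_re, c8_re] at this ⊢
    nlinarith [sqrt8_gt]
  have hslit : s + c8 ∈ Complex.slitPlane := Or.inl hre
  exact ((differentiableAt_id.pow 2 |>.const_mul (4:ℂ)).const_add 8 |>.sub
    (differentiableAt_id.pow 4)).mul
    ((differentiableAt_id.add_const c8).cpow (differentiableAt_const _) hslit)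

lemma Qf_c8 : Qf c8 = ((-3 * (2 : ℝ) ^ ((7 : ℝ) / 4) : ℝ) : ℂ) := by
  have h8 : (c8:ℂ)^2 = 8 := by
    rw [c8, ← Complex.ofReal_pow, Real.sq_sqrt (by norm_num : (0:ℝ) ≤ 8)]; norm_num
  have h4 : (c8:ℂ)^4 = 64 := by
    rw [show (4:ℕ) = 2*2 by norm_num, pow_mul, h8]; norm_num
  have hcc : c8 + c8 = ((2 * Real.sqrt 8 : ℝ) : ℂ) := by
    rw [c8]; push_cast; ring
  have hpow : ((2 * Real.sqrt 8 : ℝ) : ℂ) ^ (-(1:ℂ)/2)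
      = (((2 * Real.sqrt 8) ^ (-(1/2):ℝ) : ℝ) : ℂ) := by
    rw [Complex.ofReal_cpow (by positivity)]
    norm_num
  have key : (2 * Real.sqrt 8 : ℝ) ^ (-(1/2):ℝ) * (-24) = -3 * (2:ℝ) ^ ((7:ℝ)/4) := by
    have h1 : (2 * Real.sqrt 8 : ℝ) = (2:ℝ) ^ ((5:ℝ)/2) := by
      rw [Real.sqrt_eq_rpow, show (8:ℝ) = (2:ℝ)^(3:ℝ) by
        rw [show (3:ℝ) = ((3:ℕ):ℝ) by norm_num, Real.rpow_natCast]; norm_num,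
        ← Real.rpow_mul (by norm_num)]
      rw [show (2:ℝ)^((5:ℝ)/2) = 2^(1:ℝ)*2^((3:ℝ)/2) by
        rw [← Real.rpow_add (by norm_num)]; norm_num, Real.rpow_one]
      norm_num
    rw [h1, ← Real.rpow_mul (by norm_num)]
    have h24 : (-24:ℝ) = -3 * (2:ℝ)^(3:ℝ) := by
      rw [show (3:ℝ) = ((3:ℕ):ℝ) by norm_num, Real.rpow_natCast]; norm_num
    rw [h24, ← mul_assoc, mul_comm ((2:ℝ) ^ ((5:ℝ)/2 * (-(1/2)))) (-3), mul_assoc,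
      ← Real.rpow_add (by norm_num)]
    norm_num
  rw [Qf]
  simp only [h8, h4, hcc, hpow]
  rw [show (8 + 4*(8:ℂ) - 64) = -24 by norm_num]
  rw [← key]; push_cast; ring

lemma cpow_ofReal_mul {u : ℝ} (hu : 0 ≤ u) {x : ℂ} (hx : x ≠ 0) (c : ℂ) (hc : c ≠ 0) :
    ((u:ℂ) * x) ^ c = (u:ℂ) ^ c * x ^ c := by
  rcases eq_or_lt_of_le hu with h | h
  · simp [← h, Complex.zero_cpow hc]
  · rcases eq_or_ne u 1 with h1 | h1
    · simp [h1]
    have hu0 : (u:ℂ) ≠ 0 := by exact_mod_cast h.ne'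
    rw [Complex.cpow_def_of_ne_zero (mul_ne_zero hu0 hx),
      Complex.cpow_def_of_ne_zero hu0, Complex.cpow_def_of_ne_zero hx,
      Complex.log_ofReal_mul h hx, ← Complex.ofReal_log h.le, add_mul, Complex.exp_add]

/-- The holomorphic factor. -/
noncomputable def Gf : ℂ → ℂ := fun z =>
  (1/2 : ℂ) * ∫ u in (0:ℝ)..1, ((u ^ (-(1/2):ℝ) : ℝ) : ℂ) * Qf (c8 + (u:ℂ) * (z - c8))

lemma Gf_c8 : Gf c8 = ((-3 * (2 : ℝ) ^ ((7 : ℝ) / 4) : ℝ) : ℂ) := by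
  have : Gf c8 = (1/2 : ℂ) * ((∫ u in (0:ℝ)..1, ((u ^ (-(1/2):ℝ) : ℝ) : ℂ)) * Qf c8) := by
    rw [Gf]
    congr 1
    rw [← intervalIntegral.integral_mul_const]
    apply intervalIntegral.integral_congr
    intro u _
    simp
  rw [this]
  have hint : (∫ u in (0:ℝ)..1, ((u ^ (-(1/2):ℝ) : ℝ) : ℂ))
      = (((∫ u in (0:ℝ)..1, u ^ (-(1/2):ℝ)) : ℝ) : ℂ) := by
    rw [intervalIntegral.integral_ofReal]
  have hval : (∫ u in (0:ℝ)..1, u ^ (-(1/2):ℝ)) = 2 := by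
    rw [integral_rpow (Or.inl (by norm_num))]
    rw [Real.one_rpow, Real.zero_rpow (by norm_num)]
    norm_num
  rw [hint, hval, Qf_c8]
  push_cast
  ring

lemma seg_mem {z : ℂ} (hz : z ∈ Metric.ball c8 1) {u : ℝ} (h0 : 0 ≤ u) (h1 : u ≤ 1) :
    c8 + (u:ℂ) * (z - c8) ∈ Metric.ball c8 1 := by
  rw [Metric.mem_ball, Complex.dist_eq] at hz ⊢
  have he : c8 + (u:ℂ) * (z - c8) - c8 = (u:ℂ) * (z - c8) := by ring
  rw [he, norm_mul, Complex.norm_real, Real.norm_eq_abs, _root_.abs_of_nonneg h0]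
  calc u * ‖z - c8‖ ≤ 1 * ‖z - c8‖ :=
        mul_le_mul_of_nonneg_right h1 (norm_nonneg _)
    _ < 1 := by rw [one_mul]; exact hz

lemma ball1_sub : Metric.ball c8 1 ⊆ Metric.ball c8 2 :=
  Metric.ball_subset_ball (by norm_num)

lemma Qf_cont : ContinuousOn Qf (Metric.ball c8 2) :=
  fun s hs => (Qf_diff s hs).continuousAt.continuousWithinAt

lemma derivQf_cont : ContinuousOn (deriv Qf) (Metric.ball c8 2) := by
  have han : AnalyticOnNhd ℂ Qf (Metric.ball c8 2) :=
    DifferentiableOn.analyticOnNhd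
      (fun s hs => (Qf_diff s hs).differentiableWithinAt) Metric.isOpen_ball
  exact han.deriv.continuousOn

lemma rpow_half_mul {u : ℝ} (hu0 : 0 < u) (hu1 : u ≤ 1) :
    u ^ (-(1/2):ℝ) * u ≤ 1 := by
  have h : u ^ (-(1/2):ℝ) * u = u ^ ((1/2):ℝ) := by
    nth_rewrite 2 [← Real.rpow_one u]
    rw [← Real.rpow_add hu0]; norm_num
  rw [h]
  exact Real.rpow_le_one hu0.le hu1 (by norm_num)

lemma Gf_diff : DifferentiableOn ℂ Gf (Metric.ball c8 1) := by
  have hK : IsCompact (Metric.closedBall c8 (3/2)) := isCompact_closedBall _ _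
  have hKsub : Metric.closedBall c8 (3/2) ⊆ Metric.ball c8 2 := by
    intro x hx
    rw [Metric.mem_closedBall] at hx
    rw [Metric.mem_ball]
    linarith
  have hKmem : ∀ {z : ℂ}, z ∈ Metric.ball c8 1 → ∀ {u : ℝ}, 0 ≤ u → u ≤ 1 →
      c8 + (u:ℂ) * (z - c8) ∈ Metric.closedBall c8 (3/2) := by
    intro z hz u h0 h1
    exact Metric.ball_subset_closedBall
      ((Metric.ball_subset_ball (by norm_num)) (seg_mem hz h0 h1))
  obtain ⟨C2, hC2⟩ := hK.exists_bound_of_continuousOn (derivQf_cont.mono hKsub)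
  set C : ℝ := max C2 1 with hC
  have hC1 : (1:ℝ) ≤ C := le_max_right _ _
  have hCge : ∀ x ∈ Metric.closedBall c8 (3/2), ‖deriv Qf x‖ ≤ C :=
    fun x hx => (hC2 x hx).trans (le_max_left _ _)
  intro z₀ hz₀
  refine DifferentiableAt.differentiableWithinAt ?_
  set ε : ℝ := 1 - dist z₀ c8 with hε
  have ε_pos : 0 < ε := by rw [hε]; rw [Metric.mem_ball] at hz₀; linarith
  have hball : Metric.ball z₀ ε ⊆ Metric.ball c8 1 := by
    intro x hx
    rw [Metric.mem_ball] at hx ⊢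
    calc dist x c8 ≤ dist x z₀ + dist z₀ c8 := dist_triangle _ _ _
      _ < ε + dist z₀ c8 := by linarith
      _ = 1 := by rw [hε]; ring
  have hmeas : ∀ z ∈ Metric.ball c8 1, AEStronglyMeasurable
      (fun u : ℝ => ((u ^ (-(1/2):ℝ) : ℝ) : ℂ) * Qf (c8 + (u:ℂ) * (z - c8)))
      (volume.restrict (Set.uIoc (0:ℝ) 1)) := by
    intro z hz
    rw [Set.uIoc_of_le (by norm_num : (0:ℝ) ≤ 1)]
    refine ContinuousOn.aestronglyMeasurable ?_ measurableSet_Ioc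
    intro u hu
    refine ContinuousAt.continuousWithinAt ?_
    have hc : ContinuousAt (fun v : ℝ => c8 + (v:ℂ) * (z - c8)) u := by fun_prop
    refine ContinuousAt.mul ?_ ?_
    · exact Complex.continuous_ofReal.continuousAt.comp
        (Real.continuousAt_rpow_const u _ (Or.inl hu.1.ne'))
    · have hs : c8 + (u:ℂ) * (z - c8) ∈ Metric.ball c8 2 :=
        ball1_sub (seg_mem hz hu.1.le hu.2)
      exact ContinuousAt.comp (f := fun v : ℝ => c8 + (v:ℂ) * (z - c8)) (x := u)
        (Qf_diff _ hs).continuousAt hc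
  have hmeas' : ∀ z ∈ Metric.ball c8 1, AEStronglyMeasurable
      (fun u : ℝ => ((u ^ (-(1/2):ℝ) : ℝ) : ℂ) * (deriv Qf (c8 + (u:ℂ) * (z - c8)) * u))
      (volume.restrict (Set.uIoc (0:ℝ) 1)) := by
    intro z hz
    rw [Set.uIoc_of_le (by norm_num : (0:ℝ) ≤ 1)]
    refine ContinuousOn.aestronglyMeasurable ?_ measurableSet_Ioc
    intro u hu
    refine ContinuousAt.continuousWithinAt ?_
    have hc : ContinuousAt (fun v : ℝ => c8 + (v:ℂ) * (z - c8)) u := by fun_prop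
    refine ContinuousAt.mul ?_ (ContinuousAt.mul ?_ ?_)
    · exact Complex.continuous_ofReal.continuousAt.comp
        (Real.continuousAt_rpow_const u _ (Or.inl hu.1.ne'))
    · have hs : c8 + (u:ℂ) * (z - c8) ∈ Metric.ball c8 2 :=
        ball1_sub (seg_mem hz hu.1.le hu.2)
      exact ContinuousAt.comp (f := fun v : ℝ => c8 + (v:ℂ) * (z - c8)) (x := u)
        (derivQf_cont.continuousAt (Metric.isOpen_ball.mem_nhds hs)) hc
    · exact Complex.continuous_ofReal.continuousAt
  have key := intervalIntegral.hasDerivAt_integral_of_dominated_loc_of_deriv_le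
    (F := fun z u => ((u ^ (-(1/2):ℝ) : ℝ) : ℂ) * Qf (c8 + (u:ℂ) * (z - c8)))
    (F' := fun z u => ((u ^ (-(1/2):ℝ) : ℝ) : ℂ) * (deriv Qf (c8 + (u:ℂ) * (z - c8)) * u))
    (x₀ := z₀) (a := (0:ℝ)) (b := 1) (μ := volume)
    (bound := fun _ => C) (Metric.ball_mem_nhds z₀ ε_pos)
    ?_ ?_ ?_ ?_ ?_ ?_
  · exact DifferentiableAt.const_mul key.2.differentiableAt _
  · filter_upwards [Metric.isOpen_ball.eventually_mem hz₀] with z hz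
    exact hmeas z hz
  · -- integrability at z₀
    have hrpow : IntervalIntegrable (fun u : ℝ => u ^ (-(1/2):ℝ)) volume 0 1 :=
      intervalIntegral.intervalIntegrable_rpow' (by norm_num)
    obtain ⟨C0, hC0⟩ := hK.exists_bound_of_continuousOn (Qf_cont.mono hKsub)
    have hCQ : ∀ x ∈ Metric.closedBall c8 (3/2), ‖Qf x‖ ≤ max C0 1 :=
      fun x hx => (hC0 x hx).trans (le_max_left _ _)
    refine IntervalIntegrable.mono_fun ((hrpow.const_mul (max C0 1))) (hmeas z₀ hz₀) ?_
    rw [Filter.EventuallyLE, ae_restrict_iff' measurableSet_uIoc]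
    filter_upwards with u hu
    rw [Set.uIoc_of_le (by norm_num : (0:ℝ) ≤ 1)] at hu
    have hu0 : (0:ℝ) < u := hu.1
    have hrp : (0:ℝ) ≤ u ^ (-(1/2):ℝ) := Real.rpow_nonneg hu0.le _
    have hs := hKmem hz₀ hu0.le hu.2
    calc ‖((u ^ (-(1/2):ℝ) : ℝ) : ℂ) * Qf (c8 + (u:ℂ) * (z₀ - c8))‖
        = u ^ (-(1/2):ℝ) * ‖Qf (c8 + (u:ℂ) * (z₀ - c8))‖ := by
          rw [norm_mul, Complex.norm_real, Real.norm_eq_abs, _root_.abs_of_nonneg hrp]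
      _ ≤ u ^ (-(1/2):ℝ) * max C0 1 := mul_le_mul_of_nonneg_left (hCQ _ hs) hrp
      _ ≤ ‖max C0 1 * u ^ (-(1/2):ℝ)‖ := by
          rw [Real.norm_eq_abs, _root_.abs_of_nonneg (by positivity), mul_comm]
  · exact hmeas' z₀ hz₀
  · -- bound
    filter_upwards with u hu x hx
    rw [Set.uIoc_of_le (by norm_num : (0:ℝ) ≤ 1)] at hu
    have hu0 : (0:ℝ) < u := hu.1
    have hrp : (0:ℝ) ≤ u ^ (-(1/2):ℝ) := Real.rpow_nonneg hu0.le _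
    have hs := hKmem (hball hx) hu0.le hu.2
    have hCpos : (0:ℝ) ≤ C := le_trans zero_le_one hC1
    calc ‖((u ^ (-(1/2):ℝ) : ℝ) : ℂ) * (deriv Qf (c8 + (u:ℂ) * (x - c8)) * u)‖
        = u ^ (-(1/2):ℝ) * (‖deriv Qf (c8 + (u:ℂ) * (x - c8))‖ * u) := by
          rw [norm_mul, norm_mul, Complex.norm_real, Complex.norm_real,
            Real.norm_eq_abs, Real.norm_eq_abs, _root_.abs_of_nonneg hrp,
            _root_.abs_of_nonneg hu0.le]
      _ ≤ u ^ (-(1/2):ℝ) * (C * u) :=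
          mul_le_mul_of_nonneg_left
            (mul_le_mul_of_nonneg_right (hCge _ hs) hu0.le) hrp
      _ = C * (u ^ (-(1/2):ℝ) * u) := by ring
      _ ≤ C * 1 := mul_le_mul_of_nonneg_left (rpow_half_mul hu0 hu.2) hCpos
      _ = C := mul_one C
  · exact intervalIntegrable_const
  · -- differentiability
    filter_upwards with u hu x hx
    rw [Set.uIoc_of_le (by norm_num : (0:ℝ) ≤ 1)] at hu
    have hs : c8 + (u:ℂ) * (x - c8) ∈ Metric.ball c8 2 :=
      ball1_sub (seg_mem (hball hx) hu.1.le hu.2)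
    have hinner : HasDerivAt (fun z : ℂ => c8 + (u:ℂ) * (z - c8)) (u:ℂ) x := by
      have := (((hasDerivAt_id x).sub_const c8).const_mul (u:ℂ)).const_add c8
      simpa using this
    have hQ : HasDerivAt Qf (deriv Qf (c8 + (u:ℂ) * (x - c8))) (c8 + (u:ℂ) * (x - c8)) :=
      (Qf_diff _ hs).hasDerivAt
    exact (hQ.comp x hinner).const_mul _

/-- Integral of `g` along the straight segment from `c8` to `z`. -/
noncomputable def segIntegral (g : ℂ → ℂ) (z : ℂ) : ℂ :=
  (z - c8) * ∫ u in (0 : ℝ)..1, g (c8 + (u : ℂ) * (z - c8))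

/-- Near `√8` the correction phase
`φ°(z) = (1/2)∫_{√8}^{z}(8 + 4s² − s⁴)(s − √8)^{−1/2}(s + √8)^{−1/2} ds` factors as
`(z − √8)^{1/2} G(z)` with `G` holomorphic and `G(√8) = −3·2^{7/4}`. -/
theorem stmt13 :
    ∃ r > (0 : ℝ), ∃ G : ℂ → ℂ,
      DifferentiableOn ℂ G (Metric.ball c8 r) ∧
      G c8 = ((-3 * (2 : ℝ) ^ ((7 : ℝ) / 4) : ℝ) : ℂ) ∧
      ∀ z ∈ Metric.ball c8 r, ¬(z.im = 0 ∧ z.re ≤ Real.sqrt 8) →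
        (1 / 2 : ℂ) * segIntegral
            (fun s => (8 + 4 * s ^ 2 - s ^ 4) *
              (s - c8) ^ (-(1 : ℂ) / 2) * (s + c8) ^ (-(1 : ℂ) / 2)) z
          = (z - c8) ^ ((1 : ℂ) / 2) * G z := by
  refine ⟨1, one_pos, Gf, Gf_diff, Gf_c8, ?_⟩
  intro z hz hcut
  have hw : z - c8 ≠ 0 := by
    intro h
    exact hcut (by rw [sub_eq_zero.mp h]; exact ⟨rfl, le_refl _⟩)
  rw [segIntegral]
  have heq : Set.EqOn
      (fun u : ℝ => (fun s => (8 + 4*s^2 - s^4) * (s - c8) ^ (-(1:ℂ)/2) *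
          (s + c8) ^ (-(1:ℂ)/2)) (c8 + (u:ℂ)*(z - c8)))
      (fun u : ℝ => (z - c8) ^ (-(1:ℂ)/2) *
          (((u ^ (-(1/2):ℝ) : ℝ):ℂ) * Qf (c8 + (u:ℂ)*(z-c8))))
      (Set.uIcc (0:ℝ) 1) := by
    intro u hu
    rw [Set.uIcc_of_le (by norm_num : (0:ℝ) ≤ 1)] at hu
    have h0 : (0:ℝ) ≤ u := hu.1
    simp only
    have hb : c8 + (u:ℂ)*(z - c8) - c8 = (u:ℂ)*(z - c8) := by ring
    rw [hb, cpow_ofReal_mul h0 hw _ (by norm_num : -(1:ℂ)/2 ≠ 0)]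
    have hr : ((u ^ (-(1/2):ℝ) : ℝ):ℂ) = (u:ℂ) ^ (-(1:ℂ)/2) := by
      rw [Complex.ofReal_cpow h0]; norm_num
    rw [Qf, hr]; ring
  rw [intervalIntegral.integral_congr heq, intervalIntegral.integral_const_mul]
  have hpow : (z - c8) ^ ((1:ℂ)/2) = (z - c8) * (z - c8) ^ (-(1:ℂ)/2) := by
    have h1 : ((1:ℂ)/2) = 1 + (-(1:ℂ)/2) := by norm_num
    rw [h1, Complex.cpow_add _ _ hw, Complex.cpow_one]
  rw [hpow, Gf]
  ring
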